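/- arXiv:1912.07339 — 2 statements merged into one kernel-verified Lean document; each statement's English description precedes it below -/
import Mathlib

section
/- The partial map classifier 𝓛_𝕊(A) = { (s, v) | s ∈ 𝕊, v : s → A }, ordered by (s, v) ≤ (s′, v′) iff s implies s′ and v′ restricted to s equals v, is order isomorphic to the free pointed ω-cpo A_⊥ over the set A (the ω-cpo completion of A + 1), via the unique ω-continuous map A_⊥ → 𝓛_𝕊(A) preserving the bottom element and compatible with the inclusions of A. -/
/-- The initial σ-frame `𝕊`, as the least subset of the propositions `Ω = Prop`
containing `False` and `True` and closed under joins of increasing ω-chains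
(equivalently, the image of the free ω-cpo completion of `𝔹 = {⊥ ≤ ⊤}` in `Ω`). -/
inductive InS : Prop → Prop
  | bot : InS False
  | top : InS True
  | sup (c : ℕ → Prop) (mono : ∀ n, c n → c (n + 1)) (h : ∀ n, InS (c n)) :
      InS (∃ n, c n)

theorem InS.of_decidable (p : Prop) [Decidable p] : InS p := by
  by_cases h : p
  · rw [eq_true h]; exact InS.top
  · rw [eq_false h]; exact InS.bot

/-- A map between preorders is ω-(Scott-)continuous if it is monotone and preserves
least upper bounds of enumerable directed subsets. -/
def OmegaContinuous {C D : Type} [Preorder C] [Preorder D] (f : C → D) : Prop :=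
  Monotone f ∧
    ∀ (U : Set C) (x : C), U.Countable → U.Nonempty → DirectedOn (· ≤ ·) U →
      IsLUB U x → IsLUB (f '' U) (f x)

/-- A preorder is an ω-cpo if every enumerable directed subset has a least upper bound. -/
def IsOmegaCPO (C : Type) [Preorder C] : Prop :=
  ∀ U : Set C, U.Countable → U.Nonempty → DirectedOn (· ≤ ·) U → ∃ x, IsLUB U x

/-- A cover-preserving monotone map from an ω-cpo presentation `(P, Cov)` into an
ordered set: the image of each cover has a least upper bound above the image of the
covered element. -/
def CovMorphism {P C : Type} [Preorder P] [Preorder C]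
    (Cov : P → Set P → Prop) (f : P → C) : Prop :=
  Monotone f ∧ ∀ p U, Cov p U → ∃ s, IsLUB (f '' U) s ∧ f p ≤ s

/-- `(Pω, η)` is the free ω-cpo completion of the ω-cpo presentation `(P, Cov)`:
`Pω` is an ω-cpo, `η` is a cover-preserving monotone map, and every cover-preserving
monotone map from `P` into an ω-cpo extends uniquely to an ω-continuous map on `Pω`. -/
structure IsFreeOmegaCompletion {P : Type} [Preorder P] (Cov : P → Set P → Prop)
    (Pω : Type) [PartialOrder Pω] (η : P → Pω) : Prop where
  cpo : IsOmegaCPO Pω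
  eta_morph : CovMorphism Cov η
  extend_unique : ∀ (C : Type) [PartialOrder C], IsOmegaCPO C →
    ∀ f : P → C, CovMorphism Cov f →
      ∃! g : Pω → C, OmegaContinuous g ∧ ∀ p, g (η p) = f p

/-- The partial map classifier `𝓛_𝕊(A)`: pairs of an extent `s ∈ 𝕊` and a value
`v : s → A`. -/
structure PartialEl (A : Type) where
  ext : Prop
  inS : InS ext
  val : ext → A

/-- The order on partial elements: `(s, v) ≤ (s', v')` iff `s` implies `s'` and `v'`
restricted to `s` equals `v`. -/
instance (A : Type) : Preorder (PartialEl A) where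
  le x y := ∃ h : x.ext → y.ext, ∀ hx : x.ext, y.val (h hx) = x.val hx
  le_refl x := ⟨id, fun _ => rfl⟩
  le_trans x y z := fun ⟨h₁, H₁⟩ ⟨h₂, H₂⟩ =>
    ⟨fun hx => h₂ (h₁ hx), fun hx => (H₂ (h₁ hx)).trans (H₁ hx)⟩

/-- The inclusion of total elements `A → 𝓛_𝕊(A)`. -/
def PartialEl.incl {A : Type} (a : A) : PartialEl A := ⟨True, InS.top, fun _ => a⟩

/-- The bottom element of `𝓛_𝕊(A)`: the unique map `⊥ → A`. -/
def PartialEl.botP (A : Type) : PartialEl A := ⟨False, InS.bot, fun h => h.elim⟩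

/-- `(AB, η, bot)` is the free pointed ω-cpo (free ω-cpo with bottom element) over
the set `A`, i.e. the ω-cpo completion of `A + 1`. -/
structure IsFreePointedOmegaCPO (A : Type) (AB : Type) [PartialOrder AB]
    (η : A → AB) (bot : AB) : Prop where
  cpo : IsOmegaCPO AB
  bot_le : ∀ x, bot ≤ x
  extend_unique : ∀ (C : Type) [PartialOrder C], IsOmegaCPO C → ∀ c : C,
    (∀ x, c ≤ x) → ∀ f : A → C,
      ∃! g : AB → C, OmegaContinuous g ∧ g bot = c ∧ ∀ a, g (η a) = f a

section Aux

variable {A : Type}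

lemma PE.antisymm {x y : PartialEl A} (hxy : x ≤ y) (hyx : y ≤ x) : x = y := by
  obtain ⟨h1, H1⟩ := hxy
  obtain ⟨h2, _⟩ := hyx
  cases x with
  | mk s hs v =>
    cases y with
    | mk t ht w =>
      dsimp at h1 h2 H1
      have hst : s = t := propext ⟨h1, h2⟩
      subst hst
      have hv : v = w := funext fun hx => (H1 hx).symm
      subst hv
      rfl

def PE.pord : PartialOrder (PartialEl A) :=
  { (inferInstance : Preorder (PartialEl A)) with
    le_antisymm := fun _ _ => PE.antisymm }

/-- Key lemma: every countable nonempty directed subset of `PartialEl A` has a LUB,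
and moreover every value of the LUB is a value of some member. -/
lemma PE.exists_lub (U : Set (PartialEl A)) (hcnt : U.Countable)
    (hne : U.Nonempty) (hdir : DirectedOn (· ≤ ·) U) :
    ∃ x, IsLUB U x ∧ ∀ hx : x.ext, ∃ z ∈ U, ∃ hz : z.ext, x.val hx = z.val hz := by
  obtain ⟨e, he⟩ := Set.Countable.exists_eq_range hcnt hne
  have heU : ∀ n, e n ∈ U := fun n => he ▸ Set.mem_range_self n
  -- build an increasing chain cofinal in U
  have step : ∀ z : {x // x ∈ U}, ∀ n : ℕ,
      ∃ w : {x // x ∈ U}, z.1 ≤ w.1 ∧ e n ≤ w.1 := by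
    intro z n
    obtain ⟨w, hwU, h1, h2⟩ := hdir z.1 z.2 (e n) (heU n)
    exact ⟨⟨w, hwU⟩, h1, h2⟩
  let u : ℕ → {x // x ∈ U} := fun n =>
    Nat.rec ⟨e 0, heU 0⟩ (fun n z => (step z (n + 1)).choose) n
  have hu1 : ∀ n, (u n).1 ≤ (u (n + 1)).1 := fun n =>
    (step (u n) (n + 1)).choose_spec.1
  have hu2 : ∀ n, e n ≤ (u n).1 := by
    intro n
    cases n with
    | zero => exact le_refl _
    | succ n => exact (step (u n) (n + 1)).choose_spec.2
  have humono : ∀ m n, m ≤ n → (u m).1 ≤ (u n).1 := by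
    intro m n hmn
    induction n with
    | zero => rw [Nat.le_zero.mp hmn]
    | succ n ih =>
      rcases Nat.lt_or_ge m (n + 1) with hlt | hge
      · exact le_trans (ih (Nat.lt_succ_iff.mp hlt)) (hu1 n)
      · rw [Nat.le_antisymm hmn hge]
  set c : ℕ → Prop := fun n => (u n).1.ext with hc
  have cmono : ∀ n, c n → c (n + 1) := fun n hn => (hu1 n).choose hn
  have key : ∀ m n, m ≤ n → ∀ (hm : c m) (hn : c n),
      (u m).1.val hm = (u n).1.val hn := by
    intro m n hmn hm hn
    obtain ⟨imp, H⟩ := humono m n hmn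
    exact (H hm).symm
  have hval : ∀ m n (hm : c m) (hn : c n), (u m).1.val hm = (u n).1.val hn :=
    fun m n hm hn => (le_total m n).elim (fun hh => key m n hh hm hn)
      (fun hh => (key n m hh hn hm).symm)
  refine ⟨⟨∃ n, c n, InS.sup c cmono (fun n => (u n).1.inS),
      fun hx => (u hx.choose).1.val hx.choose_spec⟩, ⟨?_, ?_⟩, ?_⟩
  · -- upper bound
    intro x hxU
    have : ∃ k, e k = x := by
      rw [he] at hxU; exact hxU
    obtain ⟨k, rfl⟩ := this
    refine le_trans (hu2 k) ?_
    exact ⟨fun hk => ⟨k, hk⟩, fun hk => hval _ k _ hk⟩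
  · -- least
    intro b hb
    have hub : ∀ n, (u n).1 ≤ b := fun n => hb (u n).2
    refine ⟨fun hx => (hub hx.choose).choose hx.choose_spec, ?_⟩
    intro hx
    exact (hub hx.choose).choose_spec hx.choose_spec
  · -- characterization
    intro hx
    exact ⟨(u hx.choose).1, (u hx.choose).2, hx.choose_spec, rfl⟩

lemma PE.cpo : IsOmegaCPO (PartialEl A) := fun U a b c =>
  ((PE.exists_lub U a b c).imp fun _ hx => hx.1)

lemma PE.bot_le (x : PartialEl A) : PartialEl.botP A ≤ x :=
  ⟨fun hf => hf.elim, fun hf => hf.elim⟩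

lemma OmegaContinuous.comp' {C D E : Type} [Preorder C] [Preorder D] [Preorder E]
    {f : C → D} {g : D → E} (hg : OmegaContinuous g) (hf : OmegaContinuous f) :
    OmegaContinuous (fun x => g (f x)) := by
  constructor
  · exact fun a b hab => hg.1 (hf.1 hab)
  · intro U x hcnt hne hdir hlub
    have h1 : IsLUB (f '' U) (f x) := hf.2 U x hcnt hne hdir hlub
    have hdir' : DirectedOn (· ≤ ·) (f '' U) := by
      rintro _ ⟨a, ha, rfl⟩ _ ⟨b, hb, rfl⟩
      obtain ⟨z, hz, h1', h2'⟩ := hdir a ha b hb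
      exact ⟨f z, ⟨z, hz, rfl⟩, hf.1 h1', hf.1 h2'⟩
    have h2 : IsLUB (g '' (f '' U)) (g (f x)) :=
      hg.2 (f '' U) (f x) (hcnt.image f) (hne.image f) hdir' h1
    rwa [Set.image_image] at h2

lemma omegaContinuous_id {C : Type} [Preorder C] : OmegaContinuous (id : C → C) :=
  ⟨monotone_id, fun U x _ _ _ hx => by simpa using hx⟩

end Aux

/-- the partial map classifier `𝓛_𝕊(A)` is order isomorphic to the free
pointed ω-cpo `A_⊥` over `A`, via the unique ω-continuous map `A_⊥ → 𝓛_𝕊(A)`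
preserving the bottom element and compatible with the inclusions of `A`. -/
theorem partial_map_classifier_iso
    {A AB : Type} [PartialOrder AB] (η : A → AB) (bot : AB)
    (h : IsFreePointedOmegaCPO A AB η bot) :
    (∃! f : AB → PartialEl A,
        OmegaContinuous f ∧ f bot = PartialEl.botP A ∧ ∀ a, f (η a) = PartialEl.incl a) ∧
      ∀ f : AB → PartialEl A,
        (OmegaContinuous f ∧ f bot = PartialEl.botP A ∧ ∀ a, f (η a) = PartialEl.incl a) →
          Function.Bijective f ∧ ∀ x y, x ≤ y ↔ f x ≤ f y := by
  letI : PartialOrder (PartialEl A) := PE.pord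
  constructor
  · exact h.extend_unique (PartialEl A) PE.cpo (PartialEl.botP A) PE.bot_le
      PartialEl.incl
  · rintro f ⟨hfc, hfb, hfa⟩
    -- construct the inverse g : PartialEl A → AB
    set W : PartialEl A → Set AB :=
      fun x => insert bot {y | ∃ hx : x.ext, y = η (x.val hx)} with hWdef
    have hWcnt : ∀ x, (W x).Countable := by
      intro x
      refine Set.Countable.insert _ (Set.Subsingleton.countable ?_)
      rintro y1 ⟨h1, rfl⟩ y2 ⟨h2, rfl⟩
      rfl
    have hWne : ∀ x, (W x).Nonempty := fun x => ⟨bot, Set.mem_insert _ _⟩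
    have hWbotle : ∀ x, ∀ z ∈ W x, ∀ b, z = bot ∨ z ≤ b → True := fun _ _ _ _ _ => trivial
    have hWdir : ∀ x, DirectedOn (· ≤ ·) (W x) := by
      intro x z1 hz1 z2 hz2
      rcases hz1 with rfl | ⟨h1, rfl⟩
      · exact ⟨z2, hz2, h.bot_le _, le_refl _⟩
      · rcases hz2 with rfl | ⟨h2, rfl⟩
        · exact ⟨η (x.val h1), Set.mem_insert_of_mem _ ⟨h1, rfl⟩, le_refl _, h.bot_le _⟩
        · exact ⟨η (x.val h1), Set.mem_insert_of_mem _ ⟨h1, rfl⟩, le_refl _, le_refl _⟩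
    have hWlub : ∀ x : PartialEl A, ∃ s, IsLUB (W x) s :=
      fun x => h.cpo (W x) (hWcnt x) (hWne x) (hWdir x)
    set g : PartialEl A → AB := fun x => (hWlub x).choose with hgdef
    have hg : ∀ x, IsLUB (W x) (g x) := fun x => (hWlub x).choose_spec
    have hgmono : Monotone g := by
      intro x y hxy
      refine (hg x).2 ?_
      rintro z (rfl | ⟨hx, rfl⟩)
      · exact h.bot_le _
      · obtain ⟨imp, H⟩ := hxy
        have : η (x.val hx) = η (y.val (imp hx)) := by rw [H]
        rw [this]
        exact (hg y).1 (Set.mem_insert_of_mem _ ⟨imp hx, rfl⟩)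
    have hgbot : g (PartialEl.botP A) = bot := by
      refine (hg _).unique ⟨?_, ?_⟩
      · rintro z (rfl | ⟨hx, rfl⟩)
        · exact le_refl _
        · exact hx.elim
      · intro b hb
        exact hb (Set.mem_insert _ _)
    have hgincl : ∀ a, g (PartialEl.incl a) = η a := by
      intro a
      refine (hg _).unique ⟨?_, ?_⟩
      · rintro z (rfl | ⟨hx, rfl⟩)
        · exact h.bot_le _
        · exact le_refl _
      · intro b hb
        exact hb (Set.mem_insert_of_mem _ ⟨trivial, rfl⟩)
    have hgcont : OmegaContinuous g := by
      refine ⟨hgmono, ?_⟩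
      intro U x hcnt hne hdir hlub
      constructor
      · rintro _ ⟨z, hz, rfl⟩
        exact hgmono (hlub.1 hz)
      · intro b hb
        refine (hg x).2 ?_
        rintro w (rfl | ⟨hx, rfl⟩)
        · exact le_trans (h.bot_le _) (hb ⟨hne.choose, hne.choose_spec, rfl⟩)
        · obtain ⟨sup, hsuplub, hchar⟩ := PE.exists_lub U hcnt hne hdir
          obtain rfl : x = sup := PE.antisymm (hlub.2 hsuplub.1) (hsuplub.2 hlub.1)
          obtain ⟨z, hzU, hz, hxv⟩ := hchar hx
          rw [hxv]
          exact le_trans ((hg z).1 (Set.mem_insert_of_mem _ ⟨hz, rfl⟩))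
            (hb ⟨z, hzU, rfl⟩)
    -- f ∘ g = id
    have hfg : ∀ x, f (g x) = x := by
      intro x
      have h1 : IsLUB (f '' W x) (f (g x)) :=
        hfc.2 (W x) (g x) (hWcnt x) (hWne x) (hWdir x) (hg x)
      have h2 : IsLUB (f '' W x) x := by
        constructor
        · rintro _ ⟨z, (rfl | ⟨hx, rfl⟩), rfl⟩
          · rw [hfb]; exact PE.bot_le x
          · rw [hfa]
            exact ⟨fun _ => hx, fun _ => rfl⟩
        · intro b hb
          have : ∀ hx : x.ext, PartialEl.incl (x.val hx) ≤ b := by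
            intro hx
            have : f (η (x.val hx)) ≤ b :=
              hb ⟨η (x.val hx), Set.mem_insert_of_mem _ ⟨hx, rfl⟩, rfl⟩
            rwa [hfa] at this
          exact ⟨fun hx => (this hx).choose trivial,
            fun hx => ((this hx).choose_spec trivial)⟩
      exact PE.antisymm (h1.2 h2.1) (h2.2 h1.1)
    -- g ∘ f = id
    have hgf : ∀ y, g (f y) = y := by
      obtain ⟨k, _, hkuniq⟩ := h.extend_unique AB h.cpo bot h.bot_le η
      have e1 : (fun y => g (f y)) = k := by
        refine hkuniq _ ⟨hgcont.comp' hfc, ?_, ?_⟩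
        · show g (f bot) = bot; rw [hfb]; exact hgbot
        · intro a; show g (f (η a)) = η a; rw [hfa]; exact hgincl a
      have e2 : (id : AB → AB) = k :=
        hkuniq _ ⟨omegaContinuous_id, rfl, fun _ => rfl⟩
      intro y
      calc g (f y) = k y := congrFun e1 y
        _ = y := (congrFun e2 y).symm
    refine ⟨⟨fun a b hab => ?_, fun x => ⟨g x, hfg x⟩⟩, fun x y => ⟨fun hxy => hfc.1 hxy, fun hxy => ?_⟩⟩
    · have := congrArg g hab
      rwa [hgf, hgf] at this
    · have := hgmono hxy
      rwa [hgf, hgf] at this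
end

section
/- Equip ℚ with the cover relation q ◁ U whenever U ⊆ ℚ is enumerable, directed, and has supremum q in ℚ. Then the unique ω-continuous map f : ℚ_ω → ℝ_l under ℚ (induced by the cover-preserving embedding q ↦ {p | p < q}) is an order isomorphism; similarly (ℚ⁺)_ω ≅ ℝ_l⁺. -/
/-- A lower real: an `𝕊`-valued, inhabited, rounded, downward-closed cut of rationals. -/
structure LowerReal where
  cut : ℚ → Prop
  inS : ∀ q, InS (cut q)
  inhab : ∃ q, cut q
  rounded : ∀ q, cut q → ∃ q', q < q' ∧ cut q'
  lower : ∀ q q', q < q' → cut q' → cut q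

instance : Preorder LowerReal where
  le L₁ L₂ := ∀ q, L₁.cut q → L₂.cut q
  le_refl _ _ h := h
  le_trans _ _ _ h₁ h₂ q hq := h₂ q (h₁ q hq)

/-- The lower real associated to a rational number. -/
def ratLR (q : ℚ) : LowerReal where
  cut p := p < q
  inS _ := InS.of_decidable _
  inhab := ⟨q - 1, by linarith⟩
  rounded p hp := ⟨(p + q) / 2, by constructor <;> linarith⟩
  lower _ _ h h' := lt_trans h h'

/-- The non-negative rationals. -/
abbrev QPlus := {q : ℚ // 0 ≤ q}

/-- The non-negative lower reals `ℝ_l⁺`. -/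
abbrev NNLowerReal := {L : LowerReal // ∀ q : ℚ, q < 0 → L.cut q}

/-- The non-negative lower real associated to a non-negative rational. -/
def ratNN (q : QPlus) : NNLowerReal :=
  ⟨ratLR q.1, fun _ hp => lt_of_lt_of_le hp q.2⟩

def zeroNN : NNLowerReal := ratNN ⟨0, le_refl 0⟩
def oneNN : NNLowerReal := ratNN ⟨1, by norm_num⟩

/-- The cover relation on `ℚ`: `q ◁ U` whenever `U` is enumerable, directed, and has
supremum `q` in `ℚ`. -/
def QCov (q : ℚ) (U : Set ℚ) : Prop :=
  U.Countable ∧ U.Nonempty ∧ DirectedOn (· ≤ ·) U ∧ IsLUB U q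

/-- The analogous cover relation on the non-negative rationals. -/
def QPCov (q : QPlus) (U : Set QPlus) : Prop :=
  U.Countable ∧ U.Nonempty ∧ DirectedOn (· ≤ ·) U ∧ IsLUB U q

section AuxLemmas

lemma directedOn_linear {α : Type*} [LinearOrder α] (S : Set α) : DirectedOn (· ≤ ·) S :=
  fun a ha b hb => (le_total a b).elim (fun h => ⟨b, hb, h, le_rfl⟩)
    (fun h => ⟨a, ha, le_rfl, h⟩)

lemma directedOn_image_mono {α β : Type*} [Preorder α] [Preorder β] {S : Set α} {f : α → β}
    (hf : Monotone f) (hS : DirectedOn (· ≤ ·) S) : DirectedOn (· ≤ ·) (f '' S) := by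
  rintro _ ⟨a, ha, rfl⟩ _ ⟨b, hb, rfl⟩
  obtain ⟨c, hc, h1, h2⟩ := hS a ha b hb
  exact ⟨f c, ⟨c, hc, rfl⟩, hf h1, hf h2⟩

lemma seq_of_countable_directed {α : Type*} [Preorder α] {S : Set α}
    (hc : S.Countable) (hne : S.Nonempty) (hd : DirectedOn (· ≤ ·) S) :
    ∃ u : ℕ → α, (∀ n, u n ∈ S) ∧ (∀ n, u n ≤ u (n + 1)) ∧ ∀ x ∈ S, ∃ n, x ≤ u n := by
  obtain ⟨e, he⟩ := hc.exists_eq_range hne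
  have heS : ∀ n, e n ∈ S := fun n => he ▸ ⟨n, rfl⟩
  have key : ∀ a : {x // x ∈ S}, ∀ n : ℕ, ∃ b : {x // x ∈ S}, a.1 ≤ b.1 ∧ e n ≤ b.1 := by
    intro a n
    obtain ⟨c, hcS, h1, h2⟩ := hd a.1 a.2 (e n) (heS n)
    exact ⟨⟨c, hcS⟩, h1, h2⟩
  choose nxt hn1 hn2 using key
  let u : ℕ → {x // x ∈ S} := fun n => Nat.rec ⟨e 0, heS 0⟩ (fun m a => nxt a (m + 1)) n
  have hsucc : ∀ n, u (n + 1) = nxt (u n) (n + 1) := fun n => rfl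
  refine ⟨fun n => (u n).1, fun n => (u n).2, fun n => by show (u n : α) ≤ (u (n+1) : α); rw [hsucc]; exact hn1 _ _, ?_⟩
  intro x hx
  rw [he] at hx
  obtain ⟨n, rfl⟩ := hx
  cases n with
  | zero => exact ⟨0, le_refl _⟩
  | succ m =>
    exact ⟨m + 1, by show e (m+1) ≤ (u (m+1) : α); rw [hsucc]; exact hn2 (u m) (m + 1)⟩
lemma LowerReal.antisymm' {L M : LowerReal} (h : L ≤ M) (h' : M ≤ L) : L = M := by
  obtain ⟨c1, _, _, _, _⟩ := L
  obtain ⟨c2, _, _, _, _⟩ := M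
  simp only [LowerReal.mk.injEq]
  funext q
  exact propext ⟨h q, h' q⟩

lemma lub_unique_LR {S : Set LowerReal} {L M : LowerReal} (hL : IsLUB S L)
    (hM : IsLUB S M) : L = M :=
  LowerReal.antisymm' (hL.2 hM.1) (hM.2 hL.1)

lemma NNLowerReal.antisymm' {L M : NNLowerReal} (h : L ≤ M) (h' : M ≤ L) : L = M :=
  Subtype.ext (LowerReal.antisymm' h h')

lemma lub_unique_NN {S : Set NNLowerReal} {L M : NNLowerReal} (hL : IsLUB S L)
    (hM : IsLUB S M) : L = M :=
  NNLowerReal.antisymm' (hL.2 hM.1) (hM.2 hL.1)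

lemma cut_of_isLUB {S : Set LowerReal} (hc : S.Countable) (hne : S.Nonempty)
    (hd : DirectedOn (· ≤ ·) S) {L : LowerReal} (hL : IsLUB S L) (q : ℚ) :
    L.cut q ↔ ∃ M ∈ S, M.cut q := by
  obtain ⟨u, huS, humono, hucof⟩ := seq_of_countable_directed hc hne hd
  set M : LowerReal :=
    { cut := fun p => ∃ n, (u n).cut p
      inS := fun p => InS.sup (fun n => (u n).cut p) (fun n h => humono n p h)
        (fun n => (u n).inS p)
      inhab := by obtain ⟨p, hp⟩ := (u 0).inhab; exact ⟨p, 0, hp⟩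
      rounded := by
        rintro p ⟨n, hp⟩
        obtain ⟨p', h1, h2⟩ := (u n).rounded p hp
        exact ⟨p', h1, n, h2⟩
      lower := by rintro p p' hpp' ⟨n, hp⟩; exact ⟨n, (u n).lower p p' hpp' hp⟩ } with hMdef
  have hMub : M ∈ upperBounds S := by
    intro N hN p hp
    obtain ⟨n, hn⟩ := hucof N hN
    exact ⟨n, hn p hp⟩
  have hMlub : IsLUB S M := ⟨hMub, fun b hb p hp => by
    obtain ⟨n, hn⟩ := hp; exact hb (huS n) p hn⟩
  rw [lub_unique_LR hL hMlub]
  constructor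
  · rintro ⟨n, hn⟩; exact ⟨u n, huS n, hn⟩
  · rintro ⟨N, hN, hNq⟩; exact hMub hN q hNq

lemma cut_of_isLUB_NN {S : Set NNLowerReal} (hc : S.Countable) (hne : S.Nonempty)
    (hd : DirectedOn (· ≤ ·) S) {L : NNLowerReal} (hL : IsLUB S L) (q : ℚ) :
    L.1.cut q ↔ ∃ M ∈ S, M.1.cut q := by
  obtain ⟨u, huS, humono, hucof⟩ := seq_of_countable_directed hc hne hd
  set M : NNLowerReal :=
    ⟨{ cut := fun p => ∃ n, (u n).1.cut p
       inS := fun p => InS.sup (fun n => (u n).1.cut p) (fun n h => humono n p h)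
         (fun n => (u n).1.inS p)
       inhab := by obtain ⟨p, hp⟩ := (u 0).1.inhab; exact ⟨p, 0, hp⟩
       rounded := by
         rintro p ⟨n, hp⟩
         obtain ⟨p', h1, h2⟩ := (u n).1.rounded p hp
         exact ⟨p', h1, n, h2⟩
       lower := by rintro p p' hpp' ⟨n, hp⟩; exact ⟨n, (u n).1.lower p p' hpp' hp⟩ },
      fun p hp => ⟨0, (u 0).2 p hp⟩⟩ with hMdef
  have hMub : M ∈ upperBounds S := by
    intro N hN p hp
    obtain ⟨n, hn⟩ := hucof N hN
    exact ⟨n, hn p hp⟩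
  have hMlub : IsLUB S M := ⟨hMub, fun b hb p hp => by
    obtain ⟨n, hn⟩ := hp; exact hb (huS n) p hn⟩
  rw [lub_unique_NN hL hMlub]
  constructor
  · rintro ⟨n, hn⟩; exact ⟨u n, huS n, hn⟩
  · rintro ⟨N, hN, hNq⟩; exact hMub hN q hNq

lemma isLUB_ratLR (L : LowerReal) : IsLUB (ratLR '' {q | L.cut q}) L := by
  constructor
  · rintro _ ⟨q, hq, rfl⟩ p hp
    exact L.lower p q hp hq
  · intro b hb p hp
    obtain ⟨p', h1, h2⟩ := L.rounded p hp
    exact hb ⟨p', h2, rfl⟩ p h1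

lemma isLUB_ratNN (L : NNLowerReal) :
    IsLUB (ratNN '' insert ⟨0, le_refl 0⟩ {q : QPlus | L.1.cut q.1}) L := by
  constructor
  · rintro _ ⟨q, hq, rfl⟩
    rcases Set.mem_insert_iff.1 hq with rfl | hq
    · intro p hp
      exact L.2 p hp
    · intro p hp
      exact L.1.lower p q.1 hp hq
  · intro b hb p hp
    rcases lt_or_ge p 0 with h0 | h0
    · exact b.2 p h0
    · obtain ⟨p', h1, h2⟩ := L.1.rounded p hp
      have hp' : (0 : ℚ) ≤ p' := le_of_lt (lt_of_le_of_lt h0 h1)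
      exact hb ⟨⟨p', hp'⟩, Set.mem_insert_iff.2 (Or.inr h2), rfl⟩ p h1

lemma qcov_lt (q : ℚ) : QCov q {p | p < q} := by
  refine ⟨Set.to_countable _, ⟨q - 1, by show q - 1 < q; linarith⟩, directedOn_linear _,
    fun p hp => le_of_lt hp, ?_⟩
  intro b hb
  by_contra h
  rw [not_le] at h
  have hm : (b + q) / 2 ∈ {p | p < q} := by show (b + q) / 2 < q; linarith
  have := hb hm
  linarith [hb hm]

lemma qpcov_lt (q : QPlus) :
    QPCov q (insert ⟨0, le_refl 0⟩ {p : QPlus | p.1 < q.1}) := by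
  refine ⟨Set.to_countable _, ⟨_, Set.mem_insert _ _⟩, directedOn_linear _, ?_, ?_⟩
  · rintro p hp
    rcases Set.mem_insert_iff.1 hp with rfl | hp
    · exact q.2
    · exact le_of_lt hp
  · intro b hb
    by_contra h
    rw [not_le] at h
    have hbq : b.1 < q.1 := h
    have h0 : (0 : ℚ) ≤ (b.1 + q.1) / 2 := by have := b.2; linarith
    have hmem : (⟨(b.1 + q.1) / 2, h0⟩ : QPlus) ∈
        insert (⟨0, le_refl 0⟩ : QPlus) {p : QPlus | p.1 < q.1} :=
      Set.mem_insert_iff.2 (Or.inr (by show (b.1 + q.1) / 2 < q.1; linarith))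
    have hle : (b.1 + q.1) / 2 ≤ b.1 := hb hmem
    linarith

end AuxLemmas
/-- the unique ω-continuous maps `ℚ_ω → ℝ_l` and `(ℚ⁺)_ω → ℝ_l⁺` under
`ℚ` (resp. `ℚ⁺`), induced by the cover-preserving embeddings `q ↦ {p | p < q}`, are
order isomorphisms. -/
theorem lower_reals_are_completion_of_rationals
    {Qω QPω : Type} [PartialOrder Qω] [PartialOrder QPω]
    (η : ℚ → Qω) (ηp : QPlus → QPω)
    (hQω : IsFreeOmegaCompletion QCov Qω η)
    (hQPω : IsFreeOmegaCompletion QPCov QPω ηp)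
    (f : Qω → LowerReal) (hf : OmegaContinuous f) (hfη : ∀ q, f (η q) = ratLR q)
    (g : QPω → NNLowerReal) (hg : OmegaContinuous g) (hgη : ∀ q, g (ηp q) = ratNN q) :
    (Function.Bijective f ∧ ∀ x y, x ≤ y ↔ f x ≤ f y) ∧
      (Function.Bijective g ∧ ∀ x y, x ≤ y ↔ g x ≤ g y) := by

  constructor
  -- ===== the rational part =====
  · have hηmono := hQω.eta_morph.1
    have hD : ∀ L : LowerReal, ∃ x : Qω, IsLUB (η '' {q | L.cut q}) x := by
      intro L
      refine hQω.cpo _ ((Set.to_countable _).image η) ?_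
        (directedOn_image_mono hηmono (directedOn_linear _))
      obtain ⟨q, hq⟩ := L.inhab
      exact ⟨η q, q, hq, rfl⟩
    choose s hs using hD
    have hsmono : ∀ L M : LowerReal, L ≤ M → s L ≤ s M := by
      intro L M hLM
      refine (hs L).2 ?_
      rintro _ ⟨q, hq, rfl⟩
      exact (hs M).1 ⟨q, hLM q hq, rfl⟩
    have hfs : ∀ L : LowerReal, f (s L) = L := by
      intro L
      have h1 := hf.2 _ _ ((Set.to_countable _).image η)
        (by obtain ⟨q, hq⟩ := L.inhab; exact ⟨η q, q, hq, rfl⟩)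
        (directedOn_image_mono hηmono (directedOn_linear _)) (hs L)
      rw [Set.image_image] at h1
      have himg : (fun q => f (η q)) '' {q | L.cut q} = ratLR '' {q | L.cut q} :=
        Set.image_congr fun q _ => hfη q
      rw [himg] at h1
      exact lub_unique_LR h1 (isLUB_ratLR L)
    have hsrat : ∀ q : ℚ, s (ratLR q) = η q := by
      intro q
      obtain ⟨t0, hlub, hle⟩ := hQω.eta_morph.2 q _ (qcov_lt q)
      have hub : η q ∈ upperBounds (η '' {p | p < q}) := by
        rintro _ ⟨p, hp, rfl⟩
        exact hηmono (le_of_lt hp)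
      have ht0 : t0 = η q := le_antisymm (hlub.2 hub) hle
      have hlub' : IsLUB (η '' {p | (ratLR q).cut p}) t0 := hlub
      exact ((hs (ratLR q)).unique hlub').trans ht0
    have hscont : ∀ (S : Set LowerReal) (L : LowerReal), S.Countable → S.Nonempty →
        DirectedOn (· ≤ ·) S → IsLUB S L → IsLUB (s '' S) (s L) := by
      intro S L hc hne hd hL
      constructor
      · rintro _ ⟨M, hM, rfl⟩
        exact hsmono M L (hL.1 hM)
      · intro b hb
        refine (hs L).2 ?_
        rintro _ ⟨q, hq, rfl⟩
        obtain ⟨M, hM, hMq⟩ := (cut_of_isLUB hc hne hd hL q).1 hq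
        exact le_trans ((hs M).1 ⟨q, hMq, rfl⟩) (hb ⟨M, hM, rfl⟩)
    obtain ⟨g₀, _, hg₀uniq⟩ := hQω.extend_unique Qω hQω.cpo η hQω.eta_morph
    have hidg : (id : Qω → Qω) = g₀ := by
      refine hg₀uniq id ⟨⟨monotone_id, ?_⟩, fun p => rfl⟩
      intro U x _ _ _ hx
      simpa using hx
    have hsfg : (fun x => s (f x)) = g₀ := by
      refine hg₀uniq _ ⟨⟨?_, ?_⟩, ?_⟩
      · intro a b hab
        exact hsmono _ _ (hf.1 hab)
      · intro U x hc hne hd hx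
        have h1 := hf.2 U x hc hne hd hx
        have h2 := hscont (f '' U) (f x) (hc.image f) (hne.image f)
          (directedOn_image_mono hf.1 hd) h1
        rw [Set.image_image] at h2
        exact h2
      · intro p
        beta_reduce
        rw [hfη p]
        exact hsrat p
    have hsf : ∀ x, s (f x) = x := fun x => congrFun (hsfg.trans hidg.symm) x
    refine ⟨⟨fun a b hab => ?_, fun L => ⟨s L, hfs L⟩⟩,
      fun x y => ⟨fun h => hf.1 h, fun h => ?_⟩⟩
    · rw [← hsf a, ← hsf b, hab]
    · have := hsmono _ _ h
      rwa [hsf, hsf] at this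
  -- ===== the non-negative part =====
  · have hηpmono := hQPω.eta_morph.1
    have hD : ∀ L : NNLowerReal, ∃ x : QPω,
        IsLUB (ηp '' insert ⟨0, le_refl 0⟩ {q : QPlus | L.1.cut q.1}) x := by
      intro L
      exact hQPω.cpo _ ((Set.to_countable _).image ηp)
        ⟨ηp ⟨0, le_refl 0⟩, ⟨0, le_refl 0⟩, Set.mem_insert _ _, rfl⟩
        (directedOn_image_mono hηpmono (directedOn_linear _))
    choose t ht using hD
    have htmono : ∀ L M : NNLowerReal, L ≤ M → t L ≤ t M := by
      intro L M hLM
      refine (ht L).2 ?_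
      rintro _ ⟨q, hq, rfl⟩
      rcases Set.mem_insert_iff.1 hq with rfl | hq
      · exact (ht M).1 ⟨_, Set.mem_insert _ _, rfl⟩
      · exact (ht M).1 ⟨q, Set.mem_insert_iff.2 (Or.inr (hLM q.1 hq)), rfl⟩
    have hgt : ∀ L : NNLowerReal, g (t L) = L := by
      intro L
      have h1 := hg.2 _ _ ((Set.to_countable _).image ηp)
        ⟨ηp ⟨0, le_refl 0⟩, ⟨0, le_refl 0⟩, Set.mem_insert _ _, rfl⟩
        (directedOn_image_mono hηpmono (directedOn_linear _)) (ht L)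
      rw [Set.image_image] at h1
      have himg : (fun q => g (ηp q)) '' insert ⟨0, le_refl 0⟩ {q : QPlus | L.1.cut q.1}
          = ratNN '' insert ⟨0, le_refl 0⟩ {q : QPlus | L.1.cut q.1} :=
        Set.image_congr fun q _ => hgη q
      rw [himg] at h1
      exact lub_unique_NN h1 (isLUB_ratNN L)
    have htrat : ∀ q : QPlus, t (ratNN q) = ηp q := by
      intro q
      obtain ⟨t0, hlub, hle⟩ := hQPω.eta_morph.2 q _ (qpcov_lt q)
      have hub : ηp q ∈ upperBounds (ηp '' insert ⟨0, le_refl 0⟩ {p : QPlus | p.1 < q.1}) := by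
        rintro _ ⟨p, hp, rfl⟩
        rcases Set.mem_insert_iff.1 hp with rfl | hp
        · exact hηpmono q.2
        · exact hηpmono (le_of_lt hp)
      have ht0 : t0 = ηp q := le_antisymm (hlub.2 hub) hle
      have hlub' : IsLUB (ηp '' insert ⟨0, le_refl 0⟩
          {p : QPlus | (ratNN q).1.cut p.1}) t0 := hlub
      exact ((ht (ratNN q)).unique hlub').trans ht0
    have htcont : ∀ (S : Set NNLowerReal) (L : NNLowerReal), S.Countable → S.Nonempty →
        DirectedOn (· ≤ ·) S → IsLUB S L → IsLUB (t '' S) (t L) := by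
      intro S L hc hne hd hL
      constructor
      · rintro _ ⟨M, hM, rfl⟩
        exact htmono M L (hL.1 hM)
      · intro b hb
        refine (ht L).2 ?_
        rintro _ ⟨q, hq, rfl⟩
        rcases Set.mem_insert_iff.1 hq with rfl | hq
        · obtain ⟨M, hM⟩ := hne
          exact le_trans ((ht M).1 ⟨_, Set.mem_insert _ _, rfl⟩) (hb ⟨M, hM, rfl⟩)
        · obtain ⟨M, hM, hMq⟩ := (cut_of_isLUB_NN hc hne hd hL q.1).1 hq
          exact le_trans ((ht M).1 ⟨q, Set.mem_insert_iff.2 (Or.inr hMq), rfl⟩)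
            (hb ⟨M, hM, rfl⟩)
    obtain ⟨g₁, _, hg₁uniq⟩ := hQPω.extend_unique QPω hQPω.cpo ηp hQPω.eta_morph
    have hidg : (id : QPω → QPω) = g₁ := by
      refine hg₁uniq id ⟨⟨monotone_id, ?_⟩, fun p => rfl⟩
      intro U x _ _ _ hx
      simpa using hx
    have htgg : (fun x => t (g x)) = g₁ := by
      refine hg₁uniq _ ⟨⟨?_, ?_⟩, ?_⟩
      · intro a b hab
        exact htmono _ _ (hg.1 hab)
      · intro U x hc hne hd hx
        have h1 := hg.2 U x hc hne hd hx
        have h2 := htcont (g '' U) (g x) (hc.image g) (hne.image g)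
          (directedOn_image_mono hg.1 hd) h1
        rw [Set.image_image] at h2
        exact h2
      · intro p
        beta_reduce
        rw [hgη p]
        exact htrat p
    have htg : ∀ x, t (g x) = x := fun x => congrFun (htgg.trans hidg.symm) x
    refine ⟨⟨fun a b hab => ?_, fun L => ⟨t L, hgt L⟩⟩,
      fun x y => ⟨fun h => hg.1 h, fun h => ?_⟩⟩
    · rw [← htg a, ← htg b, hab]
    · have := htmono _ _ h
      rwa [htg, htg] at this
end
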